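/- Let p be a prime, m a positive integer, and X = Z_p[t,t^{-1}]/(ξ_m(t)) with ξ_m(t) = Σ_{i=0}^{m-1}(-t)^i. Let a_1, a_2 be powers of p with ξ_m(t) dividing 1 - t^{a_1+a_2}. For any a, b ∈ X, the 2-string braid coloring of the (2,m)-torus knot starting from top colors (a,b) (with k-th pair (tξ_{k-1}a + ξ_k b, tξ_k a + ξ_{k+1} b)) has total weight Σ_{k=1}^{m} f(tξ_{k-1}a + ξ_k b, tξ_k a + ξ_{k+1} b) = (a-b)^{a_1+a_2} · (t^2 ξ_m'(t))^{a_2} in X, where f(x_1,x_2) = (x_1-x_2)^{a_1} x_2^{a_2} and ξ_m' is the formal derivative. -/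

import Mathlib

open LaurentPolynomial Finset Polynomial

lemma sum_pow_of_add_pow {R : Type*} [CommSemiring R] {N : ℕ} (hN : N ≠ 0)
    (h : ∀ x y : R, (x + y) ^ N = x ^ N + y ^ N) {ι : Type*} (s : Finset ι) (g : ι → R) :
    (∑ i ∈ s, g i) ^ N = ∑ i ∈ s, g i ^ N := by
  classical
  induction s using Finset.cons_induction with
  | empty => simp [zero_pow hN]
  | cons i s hi ih => rw [Finset.sum_cons, Finset.sum_cons, h, ih]

lemma auxD {R : Type*} [CommRing R] (x : R) (n : ℕ) :
    ∑ j ∈ Finset.range n, x ^ (n - 1 - j) * (∑ i ∈ Finset.range (j + 1), x ^ i)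
      = ∑ i ∈ Finset.range n, ((i : R) + 1) * x ^ i := by
  induction n with
  | zero => simp
  | succ n ih =>
    rw [Finset.sum_range_succ]
    have h1 : ∀ j ∈ Finset.range n,
        x ^ (n + 1 - 1 - j) * (∑ i ∈ Finset.range (j + 1), x ^ i)
          = x * (x ^ (n - 1 - j) * (∑ i ∈ Finset.range (j + 1), x ^ i)) := by
      intro j hj
      rw [Finset.mem_range] at hj
      rw [← mul_assoc, ← pow_succ']
      congr 2
      omega
    rw [Finset.sum_congr rfl h1, ← Finset.mul_sum, ih]
    have h2 : n + 1 - 1 - n = 0 := by omega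
    rw [h2, pow_zero, one_mul, Finset.mul_sum]
    rw [Finset.sum_range_succ' (fun i => ((i : R) + 1) * x ^ i) n]
    rw [Finset.sum_range_succ' (fun i => x ^ i) n]
    rw [← add_assoc, ← Finset.sum_add_distrib]
    have h3 : ∀ i ∈ Finset.range n,
        x * ((↑i + 1) * x ^ i) + x ^ (i + 1) = ((i : R) + 1 + 1) * x ^ (i + 1) := by
      intro i _
      rw [pow_succ]
      ring
    rw [Finset.sum_congr rfl h3]
    push_cast
    ring_nf
    exact congrArg (1 + ·) (Finset.sum_congr rfl fun _ _ => by ring)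

set_option maxHeartbeats 1000000 in
/-- for `X = Z_p[t,t⁻¹]/(ξ_m(t))`, powers `a₁ = p^{m₁}`,
`a₂ = p^{m₂}` with `ξ_m ∣ 1 - t^{a₁+a₂}`, the total weight of the
`(2,m)`-torus-knot coloring with top colors `(a,b)` under
`f(x₁,x₂) = (x₁-x₂)^{a₁} x₂^{a₂}` equals `(a-b)^{a₁+a₂}·(t²ξ_m'(t))^{a₂}`.
(The `k`-th color pair, `k = 1,…,m`, is `(tξ_{k-1}a + ξ_k b, tξ_k a + ξ_{k+1} b)`.) -/
theorem stmt15 (p m m1 m2 : ℕ) (hp : p.Prime) (hm : 0 < m)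
    (hdvd : (∑ i ∈ Finset.range m, (-X : Polynomial (ZMod p)) ^ i).toLaurent ∣
      (1 - T 1 ^ (p ^ m1 + p ^ m2))) :
    let ξpoly : Polynomial (ZMod p) := ∑ i ∈ Finset.range m, (-X) ^ i
    let a1 := p ^ m1
    let a2 := p ^ m2
    let Q := LaurentPolynomial (ZMod p) ⧸ Ideal.span {ξpoly.toLaurent}
    let t : Q := Ideal.Quotient.mk (Ideal.span {ξpoly.toLaurent}) (T 1)
    let ξ : ℕ → Q := fun k => ∑ i ∈ Finset.range k, (-t) ^ i
    let ξ' : Q := Ideal.Quotient.mk (Ideal.span {ξpoly.toLaurent})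
      ((Polynomial.derivative ξpoly).toLaurent)
    let f : Q → Q → Q := fun x1 x2 => (x1 - x2) ^ a1 * x2 ^ a2
    ∀ a b : Q,
      ∑ k ∈ Finset.range m,
          f (t * ξ k * a + ξ (k + 1) * b) (t * ξ (k + 1) * a + ξ (k + 2) * b) =
        (a - b) ^ (a1 + a2) * (t ^ 2 * ξ') ^ a2 := by
  intro ξpoly a1 a2 Q t ξ ξ' f a b
  set S : Ideal (LaurentPolynomial (ZMod p)) := Ideal.span {ξpoly.toLaurent} with hS
  set π : LaurentPolynomial (ZMod p) →+* Q := Ideal.Quotient.mk S with hπ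
  have ha1 : a1 = p ^ m1 := rfl
  have ha2 : a2 = p ^ m2 := rfl
  have ha1ne : a1 ≠ 0 := pow_ne_zero _ hp.pos.ne'
  have ha2ne : a2 ≠ 0 := pow_ne_zero _ hp.pos.ne'
  -- ξ m = 0
  have hξm : ξ m = 0 := by
    have h1 : ξ m = π ξpoly.toLaurent := by
      simp only [ξ, ξpoly, map_sum, map_pow, map_neg, Polynomial.toLaurent_X]
      rfl
    rw [h1, Ideal.Quotient.eq_zero_iff_mem]
    exact Ideal.subset_span rfl
  -- (-t)^m = 1
  have hsm : (-t) ^ m = 1 := by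
    have h := geom_sum_mul (-t) m
    rw [show (∑ i ∈ Finset.range m, (-t) ^ i) = ξ m from rfl, hξm, zero_mul] at h
    have := sub_eq_zero.mp h.symm
    exact this
  -- t^(a1+a2) = 1
  have hta : t ^ (a1 + a2) = 1 := by
    obtain ⟨c, hc⟩ := hdvd
    have h0 : π (1 - T 1 ^ (p ^ m1 + p ^ m2)) = 0 := by
      rw [hc, Ideal.Quotient.eq_zero_iff_mem]
      exact Ideal.mul_mem_right _ _ (Ideal.subset_span rfl)
    rw [map_sub, map_one, map_pow] at h0
    have := sub_eq_zero.mp h0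
    rw [ha1, ha2]
    exact this.symm
  -- (p : Q) = 0
  have hp0 : (p : Q) = 0 := by
    have h1 : ((p : ℕ) : ZMod p) = 0 := ZMod.natCast_self p
    calc (p : Q) = algebraMap (ZMod p) Q ((p : ℕ) : ZMod p) := (map_natCast _ p).symm
      _ = 0 := by rw [h1, map_zero]
  -- Frobenius
  have hfrob : ∀ (x y : Q) (r : ℕ), (x + y) ^ p ^ r = x ^ p ^ r + y ^ p ^ r := by
    intro x y r
    obtain ⟨c, hc⟩ := exists_add_pow_prime_pow_eq hp x y r
    rw [hc, hp0, zero_mul, zero_mul, zero_mul, add_zero]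
  -- (-t)^(a1+a2) = 1
  have hsa : (-t) ^ (a1 + a2) = 1 := by
    rcases hp.eq_two_or_odd' with h2 | hodd
    · have h22 : ((2 : ℕ) : Q) = 0 := by rw [← h2]; exact hp0
      push_cast at h22
      have hneg : (-t : Q) = t := by linear_combination (-t) * h22
      rw [hneg, hta]
    · have heven : Even (a1 + a2) := (hodd.pow).add_odd (hodd.pow)
      rw [Even.neg_pow heven t, hta]
  -- exponent swap
  have hinv : ∀ j : ℕ, j ≤ m → (-t) ^ (j * a1) = (-t) ^ ((m - j) * a2) := by
    intro j hj
    have h1 : (-t) ^ (j * a1) * (-t) ^ (j * a2) = 1 := by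
      rw [← pow_add, ← Nat.mul_add, pow_mul', hsa, one_pow]
    have h2 : (-t) ^ ((m - j) * a2) * (-t) ^ (j * a2) = 1 := by
      rw [← pow_add, ← Nat.add_mul, Nat.sub_add_cancel hj, pow_mul, hsm, one_pow]
    calc (-t) ^ (j * a1)
        = (-t) ^ (j * a1) * ((-t) ^ ((m - j) * a2) * (-t) ^ (j * a2)) := by rw [h2, mul_one]
      _ = (-t) ^ ((m - j) * a2) * ((-t) ^ (j * a1) * (-t) ^ (j * a2)) := by ring
      _ = (-t) ^ ((m - j) * a2) := by rw [h1, mul_one]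
  -- t * ξ' = ∑ i (-t)^i
  have htξ' : t * ξ' = ∑ i ∈ Finset.range m, ((i : ℕ) : Q) * (-t) ^ i := by
    have hXd : (X : Polynomial (ZMod p)) * Polynomial.derivative ξpoly
        = ∑ i ∈ Finset.range m, Polynomial.C ((i : ℕ) : ZMod p) * (-X) ^ i := by
      simp only [ξpoly, derivative_sum]
      rw [Finset.mul_sum]
      refine Finset.sum_congr rfl fun i _ => ?_
      rcases i with _ | i
      · simp
      · rw [derivative_pow, derivative_neg, derivative_X, Nat.succ_sub_one, pow_succ]
        push_cast
        ring
    have h1 : t * ξ' = π ((X * Polynomial.derivative ξpoly).toLaurent) := by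
      rw [map_mul, map_mul, Polynomial.toLaurent_X]
    rw [h1, hXd]
    simp only [map_sum, map_mul, map_pow, map_neg, Polynomial.toLaurent_X,
      Polynomial.toLaurent_C]
    refine Finset.sum_congr rfl fun i _ => ?_
    have hC : π (LaurentPolynomial.C ((i : ℕ) : ZMod p)) = ((i : ℕ) : Q) :=
      calc π (LaurentPolynomial.C ((i : ℕ) : ZMod p))
          = π ((i : ℕ) : LaurentPolynomial (ZMod p)) := by
            rw [map_natCast (LaurentPolynomial.C (R := ZMod p))]
        _ = ((i : ℕ) : Q) := map_natCast π i
    rw [hC]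
  -- termwise rewrite
  have key : ∀ k ∈ Finset.range m,
      f (t * ξ k * a + ξ (k+1) * b) (t * ξ (k+1) * a + ξ (k+2) * b)
        = ((-t) ^ ((k+1) * a1) * (a - b) ^ a1)
            * ((t * ξ (k+1)) ^ a2 * (a - b) ^ a2 + b ^ a2) := by
    intro k _
    have e1 : ξ (k+1) = ξ k + (-t) ^ k := Finset.sum_range_succ _ _
    have e2 : ξ (k+2) = ξ (k+1) + (-t) ^ (k+1) := Finset.sum_range_succ _ _
    have e3 : ξ (k+2) = (-t) * ξ (k+1) + 1 := geom_sum_succ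
    have hx : (t * ξ k * a + ξ (k+1) * b) - (t * ξ (k+1) * a + ξ (k+2) * b)
        = (-t) ^ (k+1) * (a - b) := by
      rw [e2, e1]; ring
    have hy : t * ξ (k+1) * a + ξ (k+2) * b = t * ξ (k+1) * (a - b) + b := by
      rw [e3]; ring
    simp only [f]
    rw [hx, hy, ha1, ha2, hfrob (t * ξ (k+1) * (a - b)) b m2, mul_pow, pow_mul, mul_pow]
  have hsplit : ∑ k ∈ Finset.range m,
      ((-t) ^ ((k+1) * a1) * (a - b) ^ a1)
          * ((t * ξ (k+1)) ^ a2 * (a - b) ^ a2 + b ^ a2)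
      = (a - b) ^ (a1 + a2) * (∑ k ∈ Finset.range m, (-t) ^ ((k+1) * a1) * (t * ξ (k+1)) ^ a2)
        + ((a - b) ^ a1 * b ^ a2) * (∑ k ∈ Finset.range m, (-t) ^ ((k+1) * a1)) := by
    rw [Finset.mul_sum, Finset.mul_sum, ← Finset.sum_add_distrib]
    refine Finset.sum_congr rfl fun k _ => ?_
    rw [pow_add]
    ring
  have hz : ∑ k ∈ Finset.range m, (-t) ^ ((k+1) * a1) = 0 := by
    have h1 : ∀ k ∈ Finset.range m, (-t) ^ ((k+1) * a1) = ((-t) ^ (k+1)) ^ (p ^ m1) :=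
      fun k _ => by rw [ha1, pow_mul]
    rw [Finset.sum_congr rfl h1,
      ← sum_pow_of_add_pow (pow_ne_zero m1 hp.pos.ne') (fun x y => hfrob x y m1)]
    have h2 : ∑ k ∈ Finset.range m, (-t) ^ (k+1) = (-t) * ξ m := by
      rw [Finset.mul_sum]
      exact Finset.sum_congr rfl fun k _ => pow_succ' _ _
    rw [h2, hξm, mul_zero, zero_pow (pow_ne_zero m1 hp.pos.ne')]
  have hone : ∑ k ∈ Finset.range m, (-t) ^ ((k+1) * a1) * (t * ξ (k+1)) ^ a2
      = (t * (t * ξ')) ^ a2 := by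
    have h1 : ∀ k ∈ Finset.range m, (-t) ^ ((k+1) * a1) * (t * ξ (k+1)) ^ a2
        = ((-t) ^ (m-1-k) * (t * ξ (k+1))) ^ (p ^ m2) := by
      intro k hk
      rw [Finset.mem_range] at hk
      rw [hinv (k+1) (by omega), show m - (k+1) = m - 1 - k from by omega, ha2, mul_pow,
        pow_mul]
      ring
    rw [Finset.sum_congr rfl h1,
      ← sum_pow_of_add_pow (pow_ne_zero m2 hp.pos.ne') (fun x y => hfrob x y m2), ha2]
    congr 1
    have h2 : ∀ k ∈ Finset.range m, (-t) ^ (m-1-k) * (t * ξ (k+1))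
        = t * ((-t) ^ (m-1-k) * ξ (k+1)) := fun k _ => by ring
    rw [Finset.sum_congr rfl h2, ← Finset.mul_sum]
    congr 1
    have h3 := auxD (-t : Q) m
    simp only [ξ]
    rw [h3]
    have h4 : ∑ i ∈ Finset.range m, ((i : Q) + 1) * (-t) ^ i
        = (∑ i ∈ Finset.range m, (i : Q) * (-t) ^ i) + ∑ i ∈ Finset.range m, (-t) ^ i := by
      rw [← Finset.sum_add_distrib]
      exact Finset.sum_congr rfl fun i _ => by ring
    rw [h4, show (∑ i ∈ Finset.range m, (-t) ^ i) = ξ m from rfl, hξm, add_zero, htξ']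
  rw [Finset.sum_congr rfl key, hsplit, hz, mul_zero, add_zero, hone]
  congr 1
  ring
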